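/- For every positive integer $k$, $\sum_{i=1}^{k} \frac{h_i}{i+k} = \sum_{i=1}^{k} \frac{h_i}{i} - \frac{1}{2} H_k h_k$. -/

import Mathlib

open scoped BigOperators

noncomputable def H (k : ℕ) : ℝ := ∑ i ∈ Finset.Icc 1 k, (1 : ℝ) / i
noncomputable def Hp (n k : ℕ) : ℝ := ∑ i ∈ Finset.Icc 1 k, (1 : ℝ) / (i : ℝ) ^ n
noncomputable def oh (n k : ℕ) : ℝ := ∑ i ∈ Finset.Icc 1 k, (1 : ℝ) / (2 * (i : ℝ) - 1) ^ n
noncomputable def Li (n : ℕ) (x : ℝ) : ℝ := ∑' m : ℕ, x ^ (m + 1) / ((m : ℝ) + 1) ^ n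

lemma Icc_succ_top' (n : ℕ) : Finset.Icc 1 (n+1) = insert (n+1) (Finset.Icc 1 n) := by
  ext x; simp [Finset.mem_Icc, Finset.mem_insert]; omega

lemma H_succ (n : ℕ) : H (n+1) = H n + 1/((n:ℝ)+1) := by
  unfold H
  rw [Icc_succ_top', Finset.sum_insert (by simp)]
  push_cast; ring

lemma oh_succ (n : ℕ) : oh 1 (n+1) = oh 1 n + 1/(2*(n:ℝ)+1) := by
  unfold oh
  rw [Icc_succ_top', Finset.sum_insert (by simp)]
  push_cast; ring

lemma H_double (k : ℕ) : H (2*k) = oh 1 k + H k / 2 := by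
  induction k with
  | zero => simp [H, oh]
  | succ n ih =>
    have : 2*(n+1) = (2*n+1)+1 := by ring
    rw [this, H_succ, H_succ, oh_succ, H_succ, ih]
    have h1 : ((n:ℝ)+1) ≠ 0 := by positivity
    have h2 : (2*(n:ℝ)+1) ≠ 0 := by positivity
    push_cast
    field_simp
    ring

lemma sum_shift (k : ℕ) : ∑ j ∈ Finset.Icc 1 k, (1:ℝ)/((j:ℝ)+(k:ℝ)) = H (2*k) - H k := by
  have hIcc : ∀ n : ℕ, Finset.Icc 1 n = Finset.Ioc 0 n := fun n => by
    ext x; simp [Finset.mem_Icc, Finset.mem_Ioc]; omega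
  have hcons := Finset.sum_Ioc_consecutive (fun i : ℕ => (1:ℝ)/i) (Nat.zero_le k)
    (by omega : k ≤ 2*k)
  have hmap : Finset.Ioc k (2*k) = (Finset.Ioc 0 k).map (addLeftEmbedding k) := by
    rw [Finset.map_add_left_Ioc]; congr 1 <;> omega
  have h2 : ∑ i ∈ Finset.Ioc k (2*k), (1:ℝ)/i
      = ∑ j ∈ Finset.Ioc 0 k, (1:ℝ)/((j:ℝ)+(k:ℝ)) := by
    rw [hmap, Finset.sum_map]
    refine Finset.sum_congr rfl fun j hj => ?_
    simp only [addLeftEmbedding_apply]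
    push_cast; ring_nf
  unfold H
  simp only [hIcc]
  rw [← h2]
  linarith [hcons]

lemma tele (g : ℕ → ℝ) (j n : ℕ) (h : j ≤ n) :
    ∑ i ∈ Finset.Ico j n, (g i - g (i+1)) = g j - g n := by
  rw [Finset.sum_Ico_eq_sum_range]
  have := Finset.sum_range_sub' (fun i => g (j + i)) (n - j)
  simpa [Nat.add_sub_cancel' h, add_assoc] using this

lemma keyB (k : ℕ) :
    ∑ i ∈ Finset.Icc 1 k, oh 1 i * (1/((i:ℝ)+(k:ℝ)) - 1/((i:ℝ)+(k:ℝ)+1))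
      = H k / (2*(2*(k:ℝ)+1)) := by
  have hoh : ∀ i : ℕ, oh 1 i = ∑ j ∈ Finset.Icc 1 i, (1:ℝ)/(2*(j:ℝ)-1) := by
    intro i; unfold oh; simp
  -- turn into double sum and swap
  have step1 : ∑ i ∈ Finset.Icc 1 k, oh 1 i * (1/((i:ℝ)+(k:ℝ)) - 1/((i:ℝ)+(k:ℝ)+1))
      = ∑ j ∈ Finset.Icc 1 k, ∑ i ∈ Finset.Icc j k,
          (1:ℝ)/(2*(j:ℝ)-1) * (1/((i:ℝ)+(k:ℝ)) - 1/((i:ℝ)+(k:ℝ)+1)) := by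
    have hIcc1 : ∀ n : ℕ, Finset.Icc 1 n = Finset.Ico 1 (n+1) := fun n => by
      rw [Finset.Ico_add_one_right_eq_Icc]
    calc ∑ i ∈ Finset.Icc 1 k, oh 1 i * (1/((i:ℝ)+(k:ℝ)) - 1/((i:ℝ)+(k:ℝ)+1))
        = ∑ i ∈ Finset.Ico 1 (k+1), ∑ j ∈ Finset.Ico 1 (i+1),
            (1:ℝ)/(2*(j:ℝ)-1) * (1/((i:ℝ)+(k:ℝ)) - 1/((i:ℝ)+(k:ℝ)+1)) := by
          rw [← hIcc1]
          refine Finset.sum_congr rfl fun i _ => ?_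
          rw [hoh, Finset.sum_mul, hIcc1]
      _ = ∑ j ∈ Finset.Ico 1 (k+1), ∑ i ∈ Finset.Ico j (k+1),
            (1:ℝ)/(2*(j:ℝ)-1) * (1/((i:ℝ)+(k:ℝ)) - 1/((i:ℝ)+(k:ℝ)+1)) := by
          rw [← Finset.sum_Ico_Ico_comm]
      _ = _ := by
          rw [← hIcc1]
          refine Finset.sum_congr rfl fun j hj => ?_
          rw [Finset.Ico_add_one_right_eq_Icc]
  rw [step1]
  -- inner telescoping
  have step2 : ∀ j ∈ Finset.Icc 1 k,
      ∑ i ∈ Finset.Icc j k, (1:ℝ)/(2*(j:ℝ)-1) * (1/((i:ℝ)+(k:ℝ)) - 1/((i:ℝ)+(k:ℝ)+1))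
        = (1/(2*(k:ℝ)+1)) * ((1:ℝ)/(2*(j:ℝ)-1) - 1/((j:ℝ)+(k:ℝ))) := by
    intro j hj
    simp only [Finset.mem_Icc] at hj
    rw [← Finset.mul_sum]
    have hI : Finset.Icc j k = Finset.Ico j (k+1) := by rw [Finset.Ico_add_one_right_eq_Icc]
    have ht : ∑ i ∈ Finset.Ico j (k+1),
        ((fun i : ℕ => (1:ℝ)/((i:ℝ)+(k:ℝ))) i - (fun i : ℕ => (1:ℝ)/((i:ℝ)+(k:ℝ))) (i+1))
        = 1/((j:ℝ)+(k:ℝ)) - 1/((k:ℝ)+(k:ℝ)+1) := by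
      rw [tele (fun i : ℕ => (1:ℝ)/((i:ℝ)+(k:ℝ))) j (k+1) (by omega)]
      push_cast; ring_nf
    have hsum : ∑ i ∈ Finset.Icc j k, (1/((i:ℝ)+(k:ℝ)) - 1/((i:ℝ)+(k:ℝ)+1))
        = 1/((j:ℝ)+(k:ℝ)) - 1/((k:ℝ)+(k:ℝ)+1) := by
      rw [hI, ← ht]
      refine Finset.sum_congr rfl fun i _ => ?_
      push_cast; ring_nf
    rw [hsum]
    have h1 : 2*(j:ℝ)-1 ≠ 0 := by
      have : (1:ℝ) ≤ (j:ℝ) := by exact_mod_cast hj.1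
      nlinarith
    have h2 : (j:ℝ)+(k:ℝ) ≠ 0 := by
      have : (1:ℝ) ≤ (j:ℝ) := by exact_mod_cast hj.1
      have : (0:ℝ) ≤ (k:ℝ) := Nat.cast_nonneg k
      nlinarith [show (1:ℝ) ≤ (j:ℝ) from by exact_mod_cast hj.1]
    have h3 : 2*(k:ℝ)+1 ≠ 0 := by positivity
    field_simp
    ring
  rw [Finset.sum_congr rfl step2, ← Finset.mul_sum, Finset.sum_sub_distrib,
    ← hoh, sum_shift, H_double]
  have h3 : 2*(k:ℝ)+1 ≠ 0 := by positivity
  field_simp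
  ring

lemma main_all (k : ℕ) : ∑ i ∈ Finset.Icc 1 k, oh 1 i / ((i : ℝ) + (k : ℝ)) = (∑ i ∈ Finset.Icc 1 k, oh 1 i / (i : ℝ)) - (1/2) * H k * oh 1 k := by
  induction k with
  | zero => simp [H, oh]
  | succ n ih =>
    have hstep : ∀ i ∈ Finset.Icc 1 n,
        oh 1 i / ((i:ℝ) + ((n:ℝ)+1))
          = oh 1 i / ((i:ℝ)+(n:ℝ)) - oh 1 i * (1/((i:ℝ)+(n:ℝ)) - 1/((i:ℝ)+(n:ℝ)+1)) := by
      intro i hi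
      simp only [Finset.mem_Icc] at hi
      have h1 : (1:ℝ) ≤ (i:ℝ) := by exact_mod_cast hi.1
      have h2 : (0:ℝ) ≤ (n:ℝ) := Nat.cast_nonneg n
      have ha : (i:ℝ)+(n:ℝ) ≠ 0 := by nlinarith
      have hb : (i:ℝ)+(n:ℝ)+1 ≠ 0 := by nlinarith
      field_simp
      ring
    rw [Icc_succ_top', Finset.sum_insert (by simp), Finset.sum_insert (by simp)]
    push_cast
    rw [Finset.sum_congr rfl hstep, Finset.sum_sub_distrib, ih, keyB, H_succ, oh_succ]
    have h1 : (n:ℝ)+1 ≠ 0 := by positivity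
    have h2 : 2*(n:ℝ)+1 ≠ 0 := by positivity
    have h3 : (n:ℝ)+1+((n:ℝ)+1) ≠ 0 := by positivity
    field_simp
    ring

theorem stmt19 (k : ℕ) (hk : 0 < k) : ∑ i ∈ Finset.Icc 1 k, oh 1 i / ((i : ℝ) + (k : ℝ)) = (∑ i ∈ Finset.Icc 1 k, oh 1 i / (i : ℝ)) - (1/2) * H k * oh 1 k := main_all k
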